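/- Let H be a real Hilbert space with Hilbert basis (s_k)_{k∈ℕ}, and let T : H → H be a continuous self-adjoint linear operator with T s_k = Γ_k s_k for all k, where Γ : ℕ → ℝ is nondecreasing. Fix j ∈ ℕ, m ≥ 1, and continuous linear operators B_1, …, B_m : H → H. Then there exists a real orthogonal m×m matrix P = (p_{lt}) such that, setting C_l := Σ_{t=1}^m p_{lt}·B_t, one has Σ_{l=1}^m (Γ_{j+l} − Γ_j)·⟨[T, C_l] s_j, C_l s_j⟩ ≤ Σ_{l=1}^m ‖[T, C_l] s_j‖². -/

import Mathlib

open Matrix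

open scoped RealInnerProductSpace

lemma keyA {H : Type*} [NormedAddCommGroup H] [InnerProductSpace ℝ H] [CompleteSpace H]
    (s : HilbertBasis ℕ ℝ H) (T : H →L[ℝ] H)
    (hT : ∀ x y : H, ⟪T x, y⟫ = ⟪x, T y⟫)
    (Γ : ℕ → ℝ) (hΓ : Monotone Γ) (hTs : ∀ k, T (s k) = Γ k • s k)
    (j d : ℕ) (v : H) (hv : ∀ k, j < k → k ≤ j + d → ⟪v, s k⟫ = 0) :
    (Γ (j + d + 1) - Γ j) * ⟪T v - Γ j • v, v⟫ ≤ ‖T v - Γ j • v‖ ^ 2 := by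
  set w := T v - Γ j • v with hw
  have h1 : ∀ k, ⟪w, s k⟫ = (Γ k - Γ j) * ⟪v, s k⟫ := by
    intro k
    rw [hw, inner_sub_left, hT, hTs, real_inner_smul_right, real_inner_smul_left]
    ring
  have hS1 : HasSum (fun k => ⟪w, s k⟫ * ⟪s k, v⟫) ⟪w, v⟫ :=
    s.hasSum_inner_mul_inner w v
  have hS2 : HasSum (fun k => ⟪w, s k⟫ * ⟪s k, w⟫) ⟪w, w⟫ :=
    s.hasSum_inner_mul_inner w w
  have hA : 0 ≤ Γ (j + d + 1) - Γ j := sub_nonneg.2 (hΓ (by omega))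
  have key : ∀ k, (Γ (j + d + 1) - Γ j) * (⟪w, s k⟫ * ⟪s k, v⟫) ≤ ⟪w, s k⟫ * ⟪s k, w⟫ := by
    intro k
    have h2 : ⟪s k, v⟫ = ⟪v, s k⟫ := real_inner_comm _ _
    have h3 : ⟪s k, w⟫ = ⟪w, s k⟫ := real_inner_comm _ _
    rw [h2, h3, h1]
    rcases le_or_gt k j with hk | hk
    · have hG : 0 ≤ -(Γ k - Γ j) := by have := hΓ hk; linarith
      nlinarith [mul_nonneg (mul_nonneg hA hG) (sq_nonneg (⟪v, s k⟫ : ℝ)),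
        sq_nonneg ((Γ k - Γ j) * ⟪v, s k⟫)]
    · rcases le_or_gt k (j + d) with hk2 | hk2
      · rw [hv k hk hk2]; simp
      · have hG : Γ (j + d + 1) - Γ j ≤ Γ k - Γ j := by
          have := hΓ (show j + d + 1 ≤ k by omega); linarith
        have hG0 : (0:ℝ) ≤ Γ k - Γ j := le_trans hA hG
        nlinarith [mul_nonneg (mul_nonneg (sub_nonneg.2 hG) hG0) (sq_nonneg (⟪v, s k⟫ : ℝ))]
  have := hasSum_le key (hS1.mul_left _) hS2
  calc (Γ (j + d + 1) - Γ j) * ⟪w, v⟫ ≤ ⟪w, w⟫ := this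
    _ = ‖w‖ ^ 2 := real_inner_self_eq_norm_sq w

/-- Abstract Proposition 3.2: there is an orthogonal matrix `P` such that
the rotated operators `C l = ∑ t, P l t • B t` satisfy
`∑ l, (Γ (j+l) − Γ j)·⟪[T, C l] (s j), C l (s j)⟫ ≤ ∑ l, ‖[T, C l] (s j)‖²`,
where the index `l : Fin m` corresponds to `l+1 ∈ {1,…,m}`. -/
theorem stmt6 {H : Type*} [NormedAddCommGroup H] [InnerProductSpace ℝ H] [CompleteSpace H]
    (s : HilbertBasis ℕ ℝ H) (T : H →L[ℝ] H)
    (hT : ∀ x y : H, ⟪T x, y⟫ = ⟪x, T y⟫)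
    (Γ : ℕ → ℝ) (hΓ : Monotone Γ) (hTs : ∀ k, T (s k) = Γ k • s k)
    (j m : ℕ) (hm : 1 ≤ m) (B : Fin m → H →L[ℝ] H) :
    ∃ P : Matrix (Fin m) (Fin m) ℝ, Pᵀ * P = 1 ∧
      ∑ l : Fin m, (Γ (j + (l : ℕ) + 1) - Γ j) *
          ⟪T ((∑ t, P l t • B t) (s j)) - (∑ t, P l t • B t) (T (s j)),
            (∑ t, P l t • B t) (s j)⟫ ≤
        ∑ l : Fin m, ‖T ((∑ t, P l t • B t) (s j)) - (∑ t, P l t • B t) (T (s j))‖ ^ 2 := by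
  classical
  have hrank : Module.finrank ℝ (EuclideanSpace ℝ (Fin m)) = Fintype.card (Fin m) := by simp
  set f : Fin m → EuclideanSpace ℝ (Fin m) :=
    fun i => (WithLp.equiv 2 (Fin m → ℝ)).symm fun t => ⟪B t (s j), s (j + (i : ℕ) + 1)⟫ with hf
  set e := @InnerProductSpace.gramSchmidtOrthonormalBasis ℝ (EuclideanSpace ℝ (Fin m)) _ _ _ (Fin m) _ _ (inferInstance : WellFoundedLT (Fin m)) _ _ hrank f with he
  set P : Matrix (Fin m) (Fin m) ℝ := fun l t => e l t with hP
  have hinner : ∀ x y : EuclideanSpace ℝ (Fin m), ⟪x, y⟫ = ∑ t, x t * y t := by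
    intro x y
    simp [PiLp.inner_apply, RCLike.inner_apply, mul_comm]
  refine ⟨P, ?_, ?_⟩
  · rw [mul_eq_one_comm]
    ext l l'
    have := e.orthonormal
    rw [orthonormal_iff_ite] at this
    have h := this l l'
    rw [hinner] at h
    simpa [Matrix.mul_apply, Matrix.one_apply] using h
  · -- the rotated vectors
    have hCs : ∀ (l : Fin m), (∑ t, P l t • B t) (s j) = ∑ t, P l t • (B t (s j)) := by
      intro l
      simp [ContinuousLinearMap.sum_apply]
  -- key orthogonality
    have hzero : ∀ (l : Fin m) (k : ℕ), j < k → k ≤ j + (l : ℕ) →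
        ⟪(∑ t, P l t • B t) (s j), s k⟫ = 0 := by
      intro l k hk1 hk2
      have hlm : (l : ℕ) < m := l.isLt
      set i : Fin m := ⟨k - j - 1, by omega⟩ with hi
      have hil : i < l := by
        rw [Fin.lt_def]
        simp only [hi]
        omega
      have hjk : j + (i : ℕ) + 1 = k := by simp only [hi]; omega
      have horth : ⟪e l, f i⟫ = 0 := @InnerProductSpace.gramSchmidtOrthonormalBasis_inv_triangular ℝ (EuclideanSpace ℝ (Fin m)) _ _ _ (Fin m) _ _ (inferInstance : WellFoundedLT (Fin m)) _ _ hrank f i l hil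
      rw [hinner] at horth
      rw [hCs l, sum_inner]
      rw [← hjk]
      rw [← horth]
      refine Finset.sum_congr rfl fun t _ => ?_
      rw [real_inner_smul_left]
      rfl
    -- pointwise inequality
    refine Finset.sum_le_sum fun l _ => ?_
    have hv := hzero l
    have hTsj : (∑ t, P l t • B t) (T (s j)) = Γ j • ((∑ t, P l t • B t) (s j)) := by
      rw [hTs j]; exact ContinuousLinearMap.map_smul _ _ _
    rw [hTsj]
    exact keyA s T hT Γ hΓ hTs j (l : ℕ) _ hv
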